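/- (Optimality of the ⋆M-orthogonal projection.) Let M₃,…,M_p be invertible with each M_k = c_k W_k, c_k ≠ 0 and W_k orthogonal. Let U ∈ ℝ^{n₁×k×n₃×⋯×n_p} satisfy Uᵀ ⋆M U = I (the k×k ⋆M-identity), and let T ∈ ℝ^{n₁×1×n₃×⋯×n_p}. Then the projection P = U ⋆M (Uᵀ ⋆M T) satisfies ‖T − P‖_F ≤ ‖T − U ⋆M C‖_F for every coefficient tensor C ∈ ℝ^{k×1×n₃×⋯×n_p}; that is, P is the closest element of the span of the lateral slices of U to T in the Frobenius norm. -/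
import Mathlib


open Matrix

/-!
Order-`p` real tensors (`p = q + 2`) are represented as families of frontal
slices: a tensor `A ∈ ℝ^{n₁ × n₂ × n₃ × ⋯ × n_p}` is a function
`A : TI m → Matrix (Fin n₁) (Fin n₂) ℝ`, where `TI m = ∀ k : Fin q, Fin (m k)`
is the trailing multi-index `(i₃, …, i_p)` and `A i` is the frontal slice
`A(:,:,i₃,…,i_p)`.
-/

namespace TSVDM

variable {q : ℕ} {m : Fin q → ℕ}

/-- Trailing multi-index `(i₃, …, i_p)`. -/
abbrev TI (m : Fin q → ℕ) : Type := ∀ k, Fin (m k)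

/-- Transform-domain tensor `Â = A ×₃ M₃ ×₄ M₄ ⋯ ×_p M_p`
(mode-`k` products along all trailing modes). -/
noncomputable def hat (M : ∀ k, Matrix (Fin (m k)) (Fin (m k)) ℝ) {a b : Type}
    (A : TI m → Matrix a b ℝ) : TI m → Matrix a b ℝ :=
  fun i => ∑ j : TI m, (∏ k, M k (i k) (j k)) • A j

/-- Inverse transform `×₃ M₃⁻¹ ×₄ M₄⁻¹ ⋯ ×_p M_p⁻¹`. -/
noncomputable def unhat (M : ∀ k, Matrix (Fin (m k)) (Fin (m k)) ℝ) {a b : Type}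
    (A : TI m → Matrix a b ℝ) : TI m → Matrix a b ℝ :=
  fun i => ∑ j : TI m, (∏ k, (M k)⁻¹ (i k) (j k)) • A j

/-- The `⋆M`-product: `A ⋆M B = (Â △ B̂) ×₃ M₃⁻¹ ⋯ ×_p M_p⁻¹`, where `△` is the
facewise product (slice-wise matrix multiplication). -/
noncomputable def starM (M : ∀ k, Matrix (Fin (m k)) (Fin (m k)) ℝ)
    {a b c : Type} [Fintype b]
    (A : TI m → Matrix a b ℝ) (B : TI m → Matrix b c ℝ) : TI m → Matrix a c ℝ :=
  unhat M (fun i => hat M A i * hat M B i)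

/-- The `⋆M`-transpose: transpose every transform-domain frontal slice. -/
noncomputable def transM (M : ∀ k, Matrix (Fin (m k)) (Fin (m k)) ℝ) {a b : Type}
    (A : TI m → Matrix a b ℝ) : TI m → Matrix b a ℝ :=
  unhat M (fun i => (hat M A i)ᵀ)

/-- The `⋆M`-identity: all transform-domain frontal slices equal the identity matrix. -/
noncomputable def idM (M : ∀ k, Matrix (Fin (m k)) (Fin (m k)) ℝ)
    (a : Type) [DecidableEq a] : TI m → Matrix a a ℝ :=
  unhat M (fun _ => (1 : Matrix a a ℝ))

/-- `Q` is `⋆M`-orthogonal if `Qᵀ ⋆M Q = Q ⋆M Qᵀ = I`. -/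
def IsStarMOrthogonal (M : ∀ k, Matrix (Fin (m k)) (Fin (m k)) ℝ)
    {a : Type} [Fintype a] [DecidableEq a] (Q : TI m → Matrix a a ℝ) : Prop :=
  starM M (transM M Q) Q = idM M a ∧ starM M Q (transM M Q) = idM M a

/-- Frobenius norm of a tensor. -/
noncomputable def frob {a b : Type} [Fintype a] [Fintype b]
    (A : TI m → Matrix a b ℝ) : ℝ :=
  Real.sqrt (∑ i : TI m, ∑ r : a, ∑ c : b, A i r c ^ 2)

/-- Diagonal position `(j, j)`: row index. -/
def dIdx₁ {n₁ n₂ : ℕ} (j : Fin (min n₁ n₂)) : Fin n₁ :=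
  ⟨j.1, lt_of_lt_of_le j.2 (Nat.min_le_left n₁ n₂)⟩

/-- Diagonal position `(j, j)`: column index. -/
def dIdx₂ {n₁ n₂ : ℕ} (j : Fin (min n₁ n₂)) : Fin n₂ :=
  ⟨j.1, lt_of_lt_of_le j.2 (Nat.min_le_right n₁ n₂)⟩

/-- `A = U ⋆M S ⋆M Vᵀ` is a t-SVDM of `A`: `U`, `V` are `⋆M`-orthogonal, `S` is
f-diagonal (each transform-domain frontal slice is diagonal), and the diagonal
entries of each frontal slice of `Ŝ` are nonnegative and in descending order. -/
structure IsTSVDM (M : ∀ k, Matrix (Fin (m k)) (Fin (m k)) ℝ) {n₁ n₂ : ℕ}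
    (A : TI m → Matrix (Fin n₁) (Fin n₂) ℝ)
    (U : TI m → Matrix (Fin n₁) (Fin n₁) ℝ)
    (S : TI m → Matrix (Fin n₁) (Fin n₂) ℝ)
    (V : TI m → Matrix (Fin n₂) (Fin n₂) ℝ) : Prop where
  decomp : A = starM M (starM M U S) (transM M V)
  orthU : IsStarMOrthogonal M U
  orthV : IsStarMOrthogonal M V
  fdiag : ∀ (i : TI m) (a : Fin n₁) (b : Fin n₂), (a : ℕ) ≠ (b : ℕ) → hat M S i a b = 0
  nonneg : ∀ (i : TI m) (j : Fin (min n₁ n₂)), 0 ≤ hat M S i (dIdx₁ j) (dIdx₂ j)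
  descend : ∀ (i : TI m) (j j' : Fin (min n₁ n₂)), j ≤ j' →
    hat M S i (dIdx₁ j') (dIdx₂ j') ≤ hat M S i (dIdx₁ j) (dIdx₂ j)

/-- The `(j,j)`-singular tube of `S`, as a function of the trailing multi-index. -/
def tube {n₁ n₂ : ℕ} (S : TI m → Matrix (Fin n₁) (Fin n₂) ℝ)
    (j : Fin (min n₁ n₂)) : TI m → ℝ :=
  fun i => S i (dIdx₁ j) (dIdx₂ j)

/-- Frobenius norm of the `(j,j)`-singular tube of `S`. -/
noncomputable def tubeNorm {n₁ n₂ : ℕ} (S : TI m → Matrix (Fin n₁) (Fin n₂) ℝ)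
    (j : Fin (min n₁ n₂)) : ℝ :=
  Real.sqrt (∑ i : TI m, tube S j i ^ 2)

/-- `r` is the t-rank: the number of nonzero singular tubes (tubes `s₁,…,s_r`
are nonzero and the remaining ones vanish). -/
def HasTRank {n₁ n₂ : ℕ} (S : TI m → Matrix (Fin n₁) (Fin n₂) ℝ) (r : ℕ) : Prop :=
  ∀ j : Fin (min n₁ n₂), ((j : ℕ) < r ↔ tube S j ≠ 0)

/-- Keep only the first `k` lateral slices (columns of each frontal slice). -/
def truncCols {n k : ℕ} (hk : k ≤ n) {a : Type}
    (U : TI m → Matrix a (Fin n) ℝ) : TI m → Matrix a (Fin k) ℝ :=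
  fun i => Matrix.of fun r c => U i r (Fin.castLE hk c)

/-- Keep only the leading `k × k` block of each frontal slice. -/
def truncBlock {n₁ n₂ k : ℕ} (h₁ : k ≤ n₁) (h₂ : k ≤ n₂)
    (S : TI m → Matrix (Fin n₁) (Fin n₂) ℝ) : TI m → Matrix (Fin k) (Fin k) ℝ :=
  fun i => Matrix.of fun a b => S i (Fin.castLE h₁ a) (Fin.castLE h₂ b)

/-- The t-rank-`k` truncation `A_k = U_k ⋆M S_k ⋆M V_kᵀ`. -/
noncomputable def truncApprox (M : ∀ k, Matrix (Fin (m k)) (Fin (m k)) ℝ)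
    {n₁ n₂ : ℕ} (U : TI m → Matrix (Fin n₁) (Fin n₁) ℝ)
    (S : TI m → Matrix (Fin n₁) (Fin n₂) ℝ)
    (V : TI m → Matrix (Fin n₂) (Fin n₂) ℝ) (k : ℕ) (hk : k ≤ min n₁ n₂) :
    TI m → Matrix (Fin n₁) (Fin n₂) ℝ :=
  starM M
    (starM M (truncCols (le_trans hk (Nat.min_le_left _ _)) U)
      (truncBlock (le_trans hk (Nat.min_le_left _ _)) (le_trans hk (Nat.min_le_right _ _)) S))
    (transM M (truncCols (le_trans hk (Nat.min_le_right _ _)) V))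

/-- The `j`-th lateral slice `A(:,j,:,…,:)`, as an `n₁ × 1 × n₃ × ⋯ × n_p` tensor. -/
def lateral {n₁ n₂ : ℕ} (A : TI m → Matrix (Fin n₁) (Fin n₂) ℝ) (j : Fin n₂) :
    TI m → Matrix (Fin n₁) (Fin 1) ℝ :=
  fun i => Matrix.of fun r _ => A i r j

/-- The `(j,j)`-singular tube of `S` regarded as a `1 × 1 × n₃ × ⋯ × n_p` tensor. -/
def tubeT {n₁ n₂ : ℕ} (S : TI m → Matrix (Fin n₁) (Fin n₂) ℝ)
    (j : Fin (min n₁ n₂)) : TI m → Matrix (Fin 1) (Fin 1) ℝ :=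
  fun i => Matrix.of fun _ _ => S i (dIdx₁ j) (dIdx₂ j)



section Aux

lemma sum_prod_eq (f : ∀ k : Fin q, Fin (m k) → ℝ) :
    ∑ j : TI m, ∏ k, f k (j k) = ∏ k, ∑ x, f k x :=
  (Fintype.prod_sum f).symm

lemma prod_ite_eq_ite (i l : TI m) :
    (∏ k, (if i k = l k then (1:ℝ) else 0)) = if i = l then 1 else 0 := by
  by_cases h : i = l
  · simp [h]
  · obtain ⟨k, hk⟩ : ∃ k, i k ≠ l k := by
      by_contra hb; push_neg at hb; exact h (funext hb)
    rw [if_neg h]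
    exact Finset.prod_eq_zero (Finset.mem_univ k) (by simp [hk])

lemma hat_unhat (M : ∀ k, Matrix (Fin (m k)) (Fin (m k)) ℝ)
    (hMinv : ∀ k, M k * (M k)⁻¹ = 1) {a b : Type}
    (A : TI m → Matrix a b ℝ) : hat M (unhat M A) = A := by
  funext i
  have key : ∀ l : TI m,
      (∑ j : TI m, (∏ k, M k (i k) (j k)) * (∏ k, (M k)⁻¹ (j k) (l k)))
        = if i = l then 1 else 0 := by
    intro l
    have hprod : ∀ j : TI m, (∏ k, M k (i k) (j k)) * (∏ k, (M k)⁻¹ (j k) (l k))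
        = ∏ k, (M k (i k) (j k) * (M k)⁻¹ (j k) (l k)) := by
      intro j; rw [← Finset.prod_mul_distrib]
    simp_rw [hprod]
    rw [sum_prod_eq (fun k x => M k (i k) x * (M k)⁻¹ x (l k))]
    have hsum : ∀ k, (∑ x, M k (i k) x * (M k)⁻¹ x (l k))
        = if i k = l k then (1:ℝ) else 0 := by
      intro k
      have := congrFun (congrFun (hMinv k) (i k)) (l k)
      rw [Matrix.mul_apply] at this
      rw [this, Matrix.one_apply]
    simp_rw [hsum]
    exact prod_ite_eq_ite i l
  calc hat M (unhat M A) i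
      = ∑ j : TI m, ∑ l : TI m,
          ((∏ k, M k (i k) (j k)) * (∏ k, (M k)⁻¹ (j k) (l k))) • A l := by
        simp [hat, unhat, Finset.smul_sum, smul_smul]
    _ = ∑ l : TI m, (∑ j : TI m,
          (∏ k, M k (i k) (j k)) * (∏ k, (M k)⁻¹ (j k) (l k))) • A l := by
        rw [Finset.sum_comm]
        simp [Finset.sum_smul]
    _ = A i := by simp [key, ite_smul]

lemma hat_sub (M : ∀ k, Matrix (Fin (m k)) (Fin (m k)) ℝ) {a b : Type}
    (A B : TI m → Matrix a b ℝ) : hat M (A - B) = hat M A - hat M B := by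
  funext i
  simp [hat, smul_sub, Finset.sum_sub_distrib]

lemma hat_starM (M : ∀ k, Matrix (Fin (m k)) (Fin (m k)) ℝ)
    (hMinv : ∀ k, M k * (M k)⁻¹ = 1) {a b c : Type} [Fintype b]
    (A : TI m → Matrix a b ℝ) (B : TI m → Matrix b c ℝ) :
    hat M (starM M A B) = fun i => hat M A i * hat M B i := by
  rw [starM, hat_unhat M hMinv]

lemma hat_transM (M : ∀ k, Matrix (Fin (m k)) (Fin (m k)) ℝ)
    (hMinv : ∀ k, M k * (M k)⁻¹ = 1) {a b : Type}
    (A : TI m → Matrix a b ℝ) :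
    hat M (transM M A) = fun i => (hat M A i)ᵀ := by
  rw [transM, hat_unhat M hMinv]

lemma hat_idM (M : ∀ k, Matrix (Fin (m k)) (Fin (m k)) ℝ)
    (hMinv : ∀ k, M k * (M k)⁻¹ = 1) (a : Type) [DecidableEq a] :
    hat M (idM M a) = fun _ => (1 : Matrix a a ℝ) := by
  rw [idM, hat_unhat M hMinv]

lemma hat_apply (M : ∀ k, Matrix (Fin (m k)) (Fin (m k)) ℝ) {a b : Type}
    (A : TI m → Matrix a b ℝ) (i : TI m) (r : a) (cc : b) :
    hat M A i r cc = ∑ j : TI m, (∏ k, M k (i k) (j k)) * A j r cc := by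
  simp [hat, Matrix.sum_apply, Matrix.smul_apply, smul_eq_mul]

lemma K_orth (M : ∀ k, Matrix (Fin (m k)) (Fin (m k)) ℝ)
    (c : Fin q → ℝ)
    (hMtM : ∀ k, (M k)ᵀ * M k = (c k)^2 • 1) (j l : TI m) :
    ∑ i : TI m, (∏ k, M k (i k) (j k)) * (∏ k, M k (i k) (l k))
      = (∏ k, (c k)^2) * (if j = l then 1 else 0) := by
  have h1 : ∀ i : TI m, (∏ k, M k (i k) (j k)) * (∏ k, M k (i k) (l k))
      = ∏ k, (M k (i k) (j k) * M k (i k) (l k)) := fun i => (Finset.prod_mul_distrib).symm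
  simp_rw [h1]
  rw [sum_prod_eq (fun k x => M k x (j k) * M k x (l k))]
  have h2 : ∀ k, (∑ x, M k x (j k) * M k x (l k))
      = (c k)^2 * (if j k = l k then (1:ℝ) else 0) := by
    intro k
    have := congrFun (congrFun (hMtM k) (j k)) (l k)
    rw [Matrix.mul_apply] at this
    simp only [Matrix.smul_apply, Matrix.one_apply, smul_eq_mul, Matrix.transpose_apply] at this
    exact this
  simp_rw [h2]
  rw [Finset.prod_mul_distrib, prod_ite_eq_ite]

lemma parseval (M : ∀ k, Matrix (Fin (m k)) (Fin (m k)) ℝ)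
    (c : Fin q → ℝ)
    (hMtM : ∀ k, (M k)ᵀ * M k = (c k)^2 • 1) (f : TI m → ℝ) :
    ∑ i : TI m, (∑ j : TI m, (∏ k, M k (i k) (j k)) * f j)^2
      = (∏ k, (c k)^2) * ∑ j : TI m, f j ^2 := by
  have h1 : ∀ i : TI m, (∑ j : TI m, (∏ k, M k (i k) (j k)) * f j)^2
      = ∑ j : TI m, ∑ l : TI m,
          ((∏ k, M k (i k) (j k)) * (∏ k, M k (i k) (l k))) * (f j * f l) := by
    intro i
    rw [sq, Finset.sum_mul_sum]
    apply Finset.sum_congr rfl; intro j _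
    apply Finset.sum_congr rfl; intro l _
    ring
  simp_rw [h1]
  rw [Finset.sum_comm]
  have h2 : ∀ j : TI m, (∑ i : TI m, ∑ l : TI m,
      ((∏ k, M k (i k) (j k)) * (∏ k, M k (i k) (l k))) * (f j * f l))
      = (∏ k, (c k)^2) * f j ^ 2 := by
    intro j
    rw [Finset.sum_comm]
    have h3 : ∀ l : TI m, (∑ i : TI m,
        ((∏ k, M k (i k) (j k)) * (∏ k, M k (i k) (l k))) * (f j * f l))
        = ((∏ k, (c k)^2) * (if j = l then 1 else 0)) * (f j * f l) := by
      intro l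
      rw [← Finset.sum_mul, K_orth M c hMtM j l]
    simp_rw [h3]
    simp [ite_mul, sq]
  simp_rw [h2]
  rw [← Finset.mul_sum]

lemma parseval_tensor (M : ∀ k, Matrix (Fin (m k)) (Fin (m k)) ℝ)
    (c : Fin q → ℝ)
    (hMtM : ∀ k, (M k)ᵀ * M k = (c k)^2 • 1) {a b : Type} [Fintype a] [Fintype b]
    (A : TI m → Matrix a b ℝ) :
    ∑ i : TI m, ∑ r : a, ∑ cc : b, hat M A i r cc ^ 2
      = (∏ k, (c k)^2) * ∑ i : TI m, ∑ r : a, ∑ cc : b, A i r cc ^ 2 := by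
  calc ∑ i : TI m, ∑ r : a, ∑ cc : b, hat M A i r cc ^ 2
      = ∑ r : a, ∑ cc : b, ∑ i : TI m, hat M A i r cc ^ 2 := by
        rw [Finset.sum_comm]
        exact Finset.sum_congr rfl fun r _ => Finset.sum_comm
    _ = ∑ r : a, ∑ cc : b, (∏ k, (c k)^2) * ∑ i : TI m, A i r cc ^ 2 := by
        apply Finset.sum_congr rfl; intro r _
        apply Finset.sum_congr rfl; intro cc _
        simp_rw [hat_apply M A]
        exact parseval M c hMtM (fun j => A j r cc)
    _ = (∏ k, (c k)^2) * ∑ i : TI m, ∑ r : a, ∑ cc : b, A i r cc ^ 2 := by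
        simp_rw [← Finset.mul_sum]
        congr 1
        refine Eq.symm ?_
        rw [Finset.sum_comm]
        exact Finset.sum_congr rfl fun r _ => Finset.sum_comm

lemma mat_opt {n k c : Type} [Fintype n] [Fintype k] [Fintype c] [DecidableEq k]
    (u : Matrix n k ℝ) (hu : uᵀ * u = 1) (t : Matrix n c ℝ) (d : Matrix k c ℝ) :
    ∑ r : n, ∑ cc : c, (t - u * (uᵀ * t)) r cc ^ 2
      ≤ ∑ r : n, ∑ cc : c, (t - u * d) r cc ^ 2 := by
  set A := t - u * (uᵀ * t) with hA
  set e := uᵀ * t - d with he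
  have huA : uᵀ * A = 0 := by
    rw [hA, Matrix.mul_sub, ← Matrix.mul_assoc, hu, Matrix.one_mul, sub_self]
  have hAB : t - u * d = A + u * e := by
    rw [hA, he, Matrix.mul_sub]; abel
  have traceEq : ∀ (X Y : Matrix n c ℝ),
      ∑ r : n, ∑ cc : c, X r cc * Y r cc = Matrix.trace (Xᵀ * Y) := by
    intro X Y
    rw [Finset.sum_comm]
    simp [Matrix.trace, Matrix.mul_apply, Matrix.diag]
  have cross : ∑ r : n, ∑ cc : c, A r cc * (u * e) r cc = 0 := by
    rw [traceEq, ← Matrix.mul_assoc]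
    have hAu : Aᵀ * u = 0 := by
      have := congrArg Matrix.transpose huA
      simpa using this
    rw [hAu, Matrix.zero_mul, Matrix.trace_zero]
  rw [hAB]
  have expand : ∑ r : n, ∑ cc : c, (A + u * e) r cc ^ 2
      = (∑ r : n, ∑ cc : c, A r cc ^ 2)
        + (∑ r : n, ∑ cc : c, 2 * (A r cc * (u * e) r cc))
        + ∑ r : n, ∑ cc : c, (u * e) r cc ^ 2 := by
    simp only [Matrix.add_apply, add_sq, Finset.sum_add_distrib]
    ring_nf
  have c2 : (∑ r : n, ∑ cc : c, 2 * (A r cc * (u * e) r cc)) = 0 := by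
    simp_rw [← Finset.mul_sum]
    rw [cross, mul_zero]
  rw [expand, c2, add_zero]
  have hnn : (0:ℝ) ≤ ∑ r : n, ∑ cc : c, (u * e) r cc ^ 2 :=
    Finset.sum_nonneg fun r _ => Finset.sum_nonneg fun cc _ => sq_nonneg _
  linarith

end Aux

/-- (Optimality of the `⋆M`-orthogonal projection.)
If `Uᵀ ⋆M U = I` then the projection `P = U ⋆M Uᵀ ⋆M T` is the closest
t-linear combination of the lateral slices of `U` to `T`:
`‖T − P‖_F ≤ ‖T − U ⋆M C‖_F` for every coefficient tensor `C`. -/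
theorem starM_projection_optimal {q : ℕ} {m : Fin q → ℕ}
    (M : ∀ k, Matrix (Fin (m k)) (Fin (m k)) ℝ)
    (c : Fin q → ℝ) (W : ∀ k, Matrix (Fin (m k)) (Fin (m k)) ℝ)
    (hc : ∀ k, c k ≠ 0)
    (hW : ∀ k, W k * (W k)ᵀ = 1 ∧ (W k)ᵀ * W k = 1)
    (hM : ∀ k, M k = c k • W k)
    {n₁ k : ℕ} (U : TI m → Matrix (Fin n₁) (Fin k) ℝ)
    (hU : starM M (transM M U) U = idM M (Fin k))
    (T : TI m → Matrix (Fin n₁) (Fin 1) ℝ) :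
    ∀ C : TI m → Matrix (Fin k) (Fin 1) ℝ,
      frob (T - starM M U (starM M (transM M U) T)) ≤ frob (T - starM M U C) := by
  intro C
  have hMinv : ∀ k, M k * (M k)⁻¹ = 1 := by
    intro k
    have hinv : M k * ((c k)⁻¹ • (W k)ᵀ) = 1 := by
      rw [hM k, Matrix.smul_mul, Matrix.mul_smul, smul_smul, (hW k).1,
        mul_inv_cancel₀ (hc k), one_smul]
    rw [Matrix.inv_eq_right_inv hinv]; exact hinv
  have hMtM : ∀ k, (M k)ᵀ * M k = (c k)^2 • (1 : Matrix (Fin (m k)) (Fin (m k)) ℝ) := by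
    intro k
    rw [hM k, Matrix.transpose_smul, Matrix.smul_mul, Matrix.mul_smul, smul_smul,
      (hW k).2, sq]
  have hUhat : ∀ i, (hat M U i)ᵀ * hat M U i = 1 := by
    intro i
    have h := congrArg (hat M) hU
    rw [hat_starM M hMinv, hat_transM M hMinv, hat_idM M hMinv] at h
    exact congrFun h i
  have hP : 0 < ∏ k, (c k)^2 :=
    Finset.prod_pos fun k _ => pow_two_pos_of_ne_zero (hc k)
  have key : ∀ X Y : TI m → Matrix (Fin n₁) (Fin 1) ℝ,
      (∑ i : TI m, ∑ r, ∑ cc, hat M X i r cc ^ 2)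
        ≤ (∑ i : TI m, ∑ r, ∑ cc, hat M Y i r cc ^ 2) → frob X ≤ frob Y := by
    intro X Y h
    apply Real.sqrt_le_sqrt
    rw [parseval_tensor M c hMtM X, parseval_tensor M c hMtM Y] at h
    exact le_of_mul_le_mul_left h hP
  have hhatL : hat M (T - starM M U (starM M (transM M U) T))
      = fun i => hat M T i - hat M U i * ((hat M U i)ᵀ * hat M T i) := by
    rw [hat_sub, hat_starM M hMinv, hat_starM M hMinv, hat_transM M hMinv]
    rfl
  have hhatR : hat M (T - starM M U C)
      = fun i => hat M T i - hat M U i * hat M C i := by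
    rw [hat_sub, hat_starM M hMinv]
    rfl
  apply key
  rw [hhatL, hhatR]
  apply Finset.sum_le_sum
  intro i _
  exact mat_opt (hat M U i) (hUhat i) (hat M T i) (hat M C i)

end TSVDM
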